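/- arXiv:1502.05890 — 2 statements merged into one kernel-verified Lean document; each statement's English description precedes it below -/
import Mathlib

section
/- Under the setup of the previous statement, the matrix S = E[z z^T] ∈ R^{L×L} has spectral decomposition S = λ_u·u u^T + λ_P·P, where u = 1/√L, P = I − u u^T, λ_u = ((K−L)/(K−1))·V_y + L·ȳ², and λ_P = (K/(K−1))·V_y. In particular, both eigenvalues are at least (K/(K−1))·V_y ≥ V_y. -/
lemma exists_perm_pair {A : Type*} [DecidableEq A] {a b c d : A} (hab : a ≠ b) (hcd : c ≠ d) :
    ∃ σ : Equiv.Perm A, σ a = c ∧ σ b = d := by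
  refine ⟨(Equiv.swap a c).trans (Equiv.swap ((Equiv.swap a c) b) d), ?_, ?_⟩
  · simp only [Equiv.trans_apply, Equiv.swap_apply_left]
    apply Equiv.swap_apply_of_ne_of_ne
    · intro h
      apply hab
      have : (Equiv.swap a c) b = (Equiv.swap a c) a := by rw [Equiv.swap_apply_left, ← h]
      exact ((Equiv.swap a c).injective this).symm
    · exact hcd
  · simp only [Equiv.trans_apply, Equiv.swap_apply_left]

lemma fiber_card_single {A : Type*} [Fintype A] [DecidableEq A] {L : ℕ} (i : Fin L) (a c : A) :
    (Finset.univ.filter fun f : Fin L ↪ A => f i = a).card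
      = (Finset.univ.filter fun f : Fin L ↪ A => f i = c).card := by
  apply Finset.card_nbij' (fun f => f.trans (Equiv.swap a c).toEmbedding)
    (fun f => f.trans (Equiv.swap a c).toEmbedding)
  · intro f hf
    simp only [Finset.mem_coe, Finset.mem_filter, Finset.mem_univ, true_and] at hf ⊢
    simp [hf]
  · intro f hf
    simp only [Finset.mem_coe, Finset.mem_filter, Finset.mem_univ, true_and] at hf ⊢
    simp [hf, Equiv.swap_apply_right]
  · intro f _; ext x; simp
  · intro f _; ext x; simp

lemma fiber_card_pair {A : Type*} [Fintype A] [DecidableEq A] {L : ℕ} (i j : Fin L)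
    {a b c d : A} (hab : a ≠ b) (hcd : c ≠ d) :
    (Finset.univ.filter fun f : Fin L ↪ A => f i = a ∧ f j = b).card
      = (Finset.univ.filter fun f : Fin L ↪ A => f i = c ∧ f j = d).card := by
  obtain ⟨σ, h1, h2⟩ := exists_perm_pair hab hcd
  apply Finset.card_nbij' (fun f => f.trans σ.toEmbedding) (fun f => f.trans σ.symm.toEmbedding)
  · intro f hf
    simp only [Finset.mem_coe, Finset.mem_filter, Finset.mem_univ, true_and] at hf ⊢
    simp [hf.1, hf.2, h1, h2]
  · intro f hf
    simp only [Finset.mem_coe, Finset.mem_filter, Finset.mem_univ, true_and] at hf ⊢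
    constructor
    · simp [hf.1, ← h1]
    · simp [hf.2, ← h2]
  · intro f _; ext x; simp
  · intro f _; ext x; simp

set_option maxHeartbeats 2000000 in
/-- Spectral decomposition of S = E[z zᵀ] for z the reward vector of a uniformly random
ordered L-tuple of distinct actions: S = λ_u·uuᵀ + λ_P·P with u = 1/√L (so uuᵀ has entries
1/L), P = I − uuᵀ, λ_u = ((K−L)/(K−1))V_y + L·ȳ², λ_P = (K/(K−1))V_y; both eigenvalues are
at least (K/(K−1))·V_y ≥ V_y. -/
theorem second_moment_matrix_spectral {A : Type*} [Fintype A] [DecidableEq A] (K L : ℕ)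
    (hK : K = Fintype.card A) (hK2 : 2 ≤ K) (hL1 : 1 ≤ L) (hLK : L ≤ K)
    (y : A → ℝ) (hy : ∀ a, y a ∈ Set.Icc (0 : ℝ) 1) :
    let ybar : ℝ := (1 / (K : ℝ)) * ∑ a : A, y a
    let Vy : ℝ := (1 / (K : ℝ)) * ∑ a : A, (y a) ^ 2 - ybar ^ 2
    let lu : ℝ := (((K : ℝ) - (L : ℝ)) / ((K : ℝ) - 1)) * Vy + (L : ℝ) * ybar ^ 2
    let lP : ℝ := ((K : ℝ) / ((K : ℝ) - 1)) * Vy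
    let U : Matrix (Fin L) (Fin L) ℝ := Matrix.of fun _ _ => 1 / (L : ℝ)
    let P : Matrix (Fin L) (Fin L) ℝ := 1 - U
    (Matrix.of fun i j =>
        (1 / (Fintype.card (Fin L ↪ A) : ℝ)) * ∑ f : Fin L ↪ A, y (f i) * y (f j))
      = lu • U + lP • P ∧
    lu ≥ ((K : ℝ) / ((K : ℝ) - 1)) * Vy ∧
    ((K : ℝ) / ((K : ℝ) - 1)) * Vy ≥ Vy := by
  intro ybar Vy lu lP U P
  have hA : Fintype.card A = K := hK.symm
  have hK2R : (2 : ℝ) ≤ (K : ℝ) := by exact_mod_cast hK2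
  have hL1R : (1 : ℝ) ≤ (L : ℝ) := by exact_mod_cast hL1
  have hK0 : (K : ℝ) ≠ 0 := by linarith
  have hKm1 : (K : ℝ) - 1 ≠ 0 := by linarith
  have hL0 : (L : ℝ) ≠ 0 := by linarith
  set S1 : ℝ := ∑ a : A, y a with hS1def
  set S2 : ℝ := ∑ a : A, (y a) ^ 2 with hS2def
  have hybar : ybar = (1 / (K : ℝ)) * S1 := rfl
  have hVy : Vy = (1 / (K : ℝ)) * S2 - ybar ^ 2 := rfl
  have hlu : lu = (((K : ℝ) - (L : ℝ)) / ((K : ℝ) - 1)) * Vy + (L : ℝ) * ybar ^ 2 := rfl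
  have hlP : lP = ((K : ℝ) / ((K : ℝ) - 1)) * Vy := rfl
  -- variance nonneg
  have hexp : ∑ a : A, (y a - ybar) ^ 2 = S2 - 2 * ybar * S1 + (K : ℝ) * ybar ^ 2 := by
    calc ∑ a : A, (y a - ybar) ^ 2
        = ∑ a : A, ((y a) ^ 2 - 2 * ybar * y a + ybar ^ 2) :=
          Finset.sum_congr rfl fun a _ => by ring
      _ = S2 - 2 * ybar * S1 + (K : ℝ) * ybar ^ 2 := by
          rw [Finset.sum_add_distrib, Finset.sum_sub_distrib, ← Finset.mul_sum,
            Finset.sum_const, Finset.card_univ, hA, nsmul_eq_mul, ← hS1def, ← hS2def]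
  have hKVy : (K : ℝ) * Vy = ∑ a : A, (y a - ybar) ^ 2 := by
    rw [hexp, hVy, hybar]; field_simp; ring
  have hVy0 : 0 ≤ Vy := by
    have h := Finset.sum_nonneg (fun a (_ : a ∈ Finset.univ) => sq_nonneg (y a - ybar))
    rw [← hKVy] at h
    nlinarith
  -- S2 ≤ S1^2
  have hS2leS1sq : S2 ≤ S1 ^ 2 := by
    have h1 : ∀ a ∈ (Finset.univ : Finset A), (y a) ^ 2 ≤ y a * S1 := by
      intro a _
      have hy0 := (hy a).1
      have hle : y a ≤ S1 := by
        rw [hS1def]; exact Finset.single_le_sum (fun b _ => (hy b).1) (Finset.mem_univ a)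
      nlinarith
    calc S2 ≤ ∑ a : A, y a * S1 := by rw [hS2def]; exact Finset.sum_le_sum h1
      _ = S1 ^ 2 := by rw [← Finset.sum_mul, ← hS1def]; ring
  have hVyle : Vy ≤ ((K : ℝ) - 1) * ybar ^ 2 := by
    have hKpos : (0 : ℝ) < (K : ℝ) := by linarith
    have key : ((K : ℝ) - 1) * ((1 / (K : ℝ)) * S1) ^ 2
        - ((1 / (K : ℝ)) * S2 - ((1 / (K : ℝ)) * S1) ^ 2) = (S1 ^ 2 - S2) / (K : ℝ) := by
      field_simp; ring
    rw [hVy, hybar]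
    have hnn : (0 : ℝ) ≤ (S1 ^ 2 - S2) / (K : ℝ) :=
      div_nonneg (by linarith) hKpos.le
    linarith
  refine ⟨?_, ?_, ?_⟩
  · -- matrix identity
    have hNpos : 0 < Fintype.card (Fin L ↪ A) := by
      rw [Fintype.card_pos_iff]
      exact Function.Embedding.nonempty_iff_card_le.mpr (by simpa [← hK] using hLK)
    ext i j
    have hRHS : (lu • U + lP • P) i j
        = lu * (1 / (L : ℝ)) + lP * ((if i = j then (1 : ℝ) else 0) - 1 / (L : ℝ)) := by
      have hU : U = Matrix.of fun _ _ => 1 / (L : ℝ) := rfl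
      have hP' : P = 1 - U := rfl
      simp [hU, hP', Matrix.add_apply, Matrix.smul_apply, Matrix.sub_apply,
        Matrix.one_apply, smul_eq_mul]
    rw [Matrix.of_apply, hRHS]
    by_cases hij : i = j
    · subst hij
      rw [if_pos rfl]
      have hAne : Nonempty A := by
        rw [← Fintype.card_pos_iff, hA]; omega
      obtain ⟨a0⟩ := hAne
      set c := (Finset.univ.filter fun f : Fin L ↪ A => f i = a0).card with hcdef
      have hfib : ∀ a : A, (Finset.univ.filter fun f : Fin L ↪ A => f i = a).card = c :=
        fun a => fiber_card_single i a a0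
      have hsum : ∑ f : Fin L ↪ A, y (f i) * y (f i) = (c : ℝ) * S2 := by
        rw [← Finset.sum_fiberwise Finset.univ (fun f : Fin L ↪ A => f i)
          (fun f => y (f i) * y (f i))]
        have hinner : ∀ a : A,
            ∑ f ∈ Finset.univ.filter (fun f : Fin L ↪ A => f i = a), y (f i) * y (f i)
              = (c : ℝ) * (y a) ^ 2 := by
          intro a
          calc ∑ f ∈ Finset.univ.filter (fun f : Fin L ↪ A => f i = a), y (f i) * y (f i)
              = ∑ _f ∈ Finset.univ.filter (fun f : Fin L ↪ A => f i = a), (y a) ^ 2 :=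
                Finset.sum_congr rfl fun f hf => by
                  have h := (Finset.mem_filter.mp hf).2
                  rw [h]; ring
            _ = (c : ℝ) * (y a) ^ 2 := by rw [Finset.sum_const, hfib a, nsmul_eq_mul]
        rw [Finset.sum_congr rfl fun a _ => hinner a, ← Finset.mul_sum, ← hS2def]
      have hNc : Fintype.card (Fin L ↪ A) = K * c := by
        rw [← Finset.card_univ,
          Finset.card_eq_sum_card_fiberwise
            (f := fun f : Fin L ↪ A => f i) (t := Finset.univ) (fun x _ => Finset.mem_univ _),
          Finset.sum_congr rfl fun a _ => hfib a, Finset.sum_const, Finset.card_univ, hA,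
          smul_eq_mul]
      have hc0 : c ≠ 0 := by
        intro h; rw [h, Nat.mul_zero] at hNc; omega
      have hc0R : (c : ℝ) ≠ 0 := Nat.cast_ne_zero.mpr hc0
      rw [hsum, hNc, hlu, hlP, hVy, hybar]
      push_cast
      field_simp
      ring
    · rw [if_neg hij]
      obtain ⟨a0, b0, hab⟩ : ∃ a b : A, a ≠ b :=
        Fintype.exists_pair_of_one_lt_card (by rw [hA]; omega)
      set c := (Finset.univ.filter fun f : Fin L ↪ A => f i = a0 ∧ f j = b0).card with hcdef
      have hfib : ∀ p ∈ (Finset.univ : Finset A).offDiag,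
          (Finset.univ.filter fun f : Fin L ↪ A => (f i, f j) = p).card = c := by
        intro p hp
        have hpne : p.1 ≠ p.2 := (Finset.mem_offDiag.mp hp).2.2
        have hfe : Finset.univ.filter (fun f : Fin L ↪ A => (f i, f j) = p)
            = Finset.univ.filter (fun f : Fin L ↪ A => f i = p.1 ∧ f j = p.2) := by
          ext f; simp [Prod.ext_iff]
        rw [hfe]
        exact fiber_card_pair i j hpne hab
      have hmaps : ∀ f : Fin L ↪ A, f ∈ (Finset.univ : Finset (Fin L ↪ A)) →
          (f i, f j) ∈ (Finset.univ : Finset A).offDiag := by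
        intro f _
        simp only [Finset.mem_offDiag, Finset.mem_univ, true_and]
        exact f.injective.ne hij
      have hoffsum : ∑ p ∈ (Finset.univ : Finset A).offDiag, y p.1 * y p.2 = S1 ^ 2 - S2 := by
        have hd : ∑ p ∈ (Finset.univ : Finset A).diag, y p.1 * y p.2 = S2 := by
          rw [Finset.sum_diag, hS2def]
          exact Finset.sum_congr rfl fun a _ => (sq (y a)).symm
        have hu : ∑ p ∈ ((Finset.univ : Finset A) ×ˢ Finset.univ), y p.1 * y p.2 = S1 ^ 2 := by
          rw [Finset.sum_product]
          simp only [← Finset.mul_sum]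
          rw [← Finset.sum_mul, ← hS1def]; ring
        have hsplit := Finset.sum_union (Finset.disjoint_diag_offDiag (Finset.univ : Finset A))
          (f := fun p : A × A => y p.1 * y p.2)
        rw [Finset.diag_union_offDiag] at hsplit
        linarith [hd, hu, hsplit]
      have hsum : ∑ f : Fin L ↪ A, y (f i) * y (f j) = (c : ℝ) * (S1 ^ 2 - S2) := by
        rw [← Finset.sum_fiberwise_of_maps_to hmaps (fun f : Fin L ↪ A => y (f i) * y (f j))]
        have hinner : ∀ p ∈ (Finset.univ : Finset A).offDiag,
            ∑ f ∈ Finset.univ.filter (fun f : Fin L ↪ A => (f i, f j) = p),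
              y (f i) * y (f j) = (c : ℝ) * (y p.1 * y p.2) := by
          intro p hp
          calc ∑ f ∈ Finset.univ.filter (fun f : Fin L ↪ A => (f i, f j) = p),
                y (f i) * y (f j)
              = ∑ _f ∈ Finset.univ.filter (fun f : Fin L ↪ A => (f i, f j) = p),
                  y p.1 * y p.2 :=
                Finset.sum_congr rfl fun f hf => by
                  have h := (Finset.mem_filter.mp hf).2
                  rw [← h]
            _ = (c : ℝ) * (y p.1 * y p.2) := by
                rw [Finset.sum_const, hfib p hp, nsmul_eq_mul]
        rw [Finset.sum_congr rfl hinner, ← Finset.mul_sum, hoffsum]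
      have hNc : Fintype.card (Fin L ↪ A) = (K * K - K) * c := by
        rw [← Finset.card_univ,
          Finset.card_eq_sum_card_fiberwise (f := fun f : Fin L ↪ A => (f i, f j)) hmaps,
          Finset.sum_congr rfl hfib, Finset.sum_const, Finset.offDiag_card,
          Finset.card_univ, hA, smul_eq_mul]
      have hc0 : c ≠ 0 := by
        intro h; rw [h, Nat.mul_zero] at hNc; omega
      have hc0R : (c : ℝ) ≠ 0 := Nat.cast_ne_zero.mpr hc0
      have hcast : ((K * K - K : ℕ) : ℝ) = (K : ℝ) * (K : ℝ) - (K : ℝ) := by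
        have hle : K ≤ K * K := Nat.le_mul_of_pos_left K (by omega)
        push_cast [Nat.cast_sub hle]
        ring
      rw [hsum, hNc, Nat.cast_mul, hcast, hlu, hlP, hVy, hybar]
      have hKKm : (K : ℝ) * (K : ℝ) - (K : ℝ) ≠ 0 := by
        have : (0:ℝ) < (K : ℝ) * (K : ℝ) - (K : ℝ) := by nlinarith
        exact this.ne'
      field_simp
      ring
  · rw [ge_iff_le, hlu, ← sub_nonneg]
    have hrw : (((K : ℝ) - (L : ℝ)) / ((K : ℝ) - 1)) * Vy + (L : ℝ) * ybar ^ 2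
        - (K : ℝ) / ((K : ℝ) - 1) * Vy
        = (L : ℝ) * (((K : ℝ) - 1) * ybar ^ 2 - Vy) / ((K : ℝ) - 1) := by
      field_simp; ring
    rw [hrw]
    apply div_nonneg (mul_nonneg (by linarith) (by linarith)) (by linarith)
  · rw [ge_iff_le, ← sub_nonneg]
    have hrw : (K : ℝ) / ((K : ℝ) - 1) * Vy - Vy = Vy / ((K : ℝ) - 1) := by
      field_simp; ring
    rw [hrw]
    exact div_nonneg hVy0 (by linarith)
end

section
/- Let u ∈ R^K be a probability vector (u_a ≥ 0, Σ_a u_a = 1) and q ∈ R^K nonnegative with Σ_a q_a ≤ L, where 0 < Kμ < 1 and L ≥ 1. Then Σ_a (L·u_a·q_a)/((1−Kμ)·q_a + K·L·μ·u_a) ≤ L. -/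
/-- Jensen-type bound used in the shrinking-update analysis:
Σ_a L·u_a·q_a / ((1−Kμ)q_a + KLμ·u_a) ≤ L. -/
theorem jensen_shrink_bound (K : ℕ) (hK : 1 ≤ K) (L μ : ℝ) (hL : 1 ≤ L) (hμ : 0 < μ)
    (hKμ : (K : ℝ) * μ < 1)
    (u q : Fin K → ℝ) (hu : ∀ a, 0 ≤ u a) (husum : ∑ a, u a = 1)
    (hq : ∀ a, 0 ≤ q a) (hqsum : ∑ a, q a ≤ L) :
    ∑ a, (L * u a * q a) / ((1 - (K : ℝ) * μ) * q a + (K : ℝ) * L * μ * u a) ≤ L := by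
  have hK1 : (1 : ℝ) ≤ K := by exact_mod_cast hK
  have hL0 : (0 : ℝ) < L := by linarith
  have ha : (0 : ℝ) < 1 - (K : ℝ) * μ := by linarith
  have hb : (0 : ℝ) < (K : ℝ) * L * μ := by positivity
  have key : ∀ x y : ℝ, 0 ≤ x → 0 ≤ y →
      L * x * y / ((1 - (K : ℝ) * μ) * y + (K : ℝ) * L * μ * x)
        ≤ (1 - (K : ℝ) * μ) * L * x + (K : ℝ) * μ * y := by
    intro x y hx hy
    have hD : 0 ≤ (1 - (K : ℝ) * μ) * y + (K : ℝ) * L * μ * x := by positivity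
    rcases eq_or_lt_of_le hD with h | h
    · have hx0 : x = 0 := by nlinarith
      have hy0 : y = 0 := by nlinarith
      simp [hx0, hy0]
    · rw [div_le_iff₀ h]
      nlinarith [sq_nonneg (y - x * L), mul_pos ha hb, mul_pos ha hL0,
        mul_nonneg hx hy]
  calc ∑ a, (L * u a * q a) / ((1 - (K : ℝ) * μ) * q a + (K : ℝ) * L * μ * u a)
      ≤ ∑ a, ((1 - (K : ℝ) * μ) * L * u a + (K : ℝ) * μ * q a) :=
        Finset.sum_le_sum fun i _ => key (u i) (q i) (hu i) (hq i)
    _ = (1 - (K : ℝ) * μ) * L * (∑ a, u a) + (K : ℝ) * μ * (∑ a, q a) := by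
        rw [Finset.sum_add_distrib, ← Finset.mul_sum, ← Finset.mul_sum]
    _ ≤ (1 - (K : ℝ) * μ) * L * 1 + (K : ℝ) * μ * L := by
        rw [husum]
        have : 0 ≤ (K : ℝ) * μ := by positivity
        nlinarith
    _ = L := by ring
end
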